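/- Barnes' first lemma (complex Gamma factor form): for complex $a,b,c,d$ with real parts large enough that the contour can be taken as the imaginary axis keeping all poles of $\Gamma_{\mathbb C}(z/2+a)\Gamma_{\mathbb C}(z/2+b)$ on the left and those of $\Gamma_{\mathbb C}(-z/2+c)\Gamma_{\mathbb C}(-z/2+d)$ on the right, one has $\int_{(\sigma)} \Gamma_{\mathbb{C}}(\tfrac{z}{2}+a)\Gamma_{\mathbb{C}}(\tfrac{z}{2}+b)\Gamma_{\mathbb{C}}(-\tfrac{z}{2}+c)\Gamma_{\mathbb{C}}(-\tfrac{z}{2}+d) \frac{dz}{2\pi\sqrt{-1}} = 4\,\frac{\Gamma_{\mathbb{C}}(a+c)\Gamma_{\mathbb{C}}(a+d)\Gamma_{\mathbb{C}}(b+c)\Gamma_{\mathbb{C}}(b+d)}{\Gamma_{\mathbb{C}}(a+b+c+d)}$. -/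

import Mathlib

open MeasureTheory

/-- The complex Gamma factor `Γ_ℂ(s) = 2 (2π)^{-s} Γ(s)`. -/
noncomputable def GammaC (s : ℂ) : ℂ := 2 * ((2 * Real.pi : ℝ) : ℂ) ^ (-s) * Complex.Gamma s

section BarnesAux

open Real Complex Set
open scoped FourierTransform

noncomputable def phi (p q : ℂ) (x : ℝ) : ℂ :=
  Complex.exp (p * x - (p + q) * Real.log (1 + Real.exp x))

lemma norm_phi (p q : ℂ) (x : ℝ) :
    ‖phi p q x‖ = Real.exp (p.re * x - (p.re + q.re) * Real.log (1 + Real.exp x)) := by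
  rw [phi, Complex.norm_exp]
  congr 1
  simp [Complex.sub_re, Complex.mul_re]

lemma phi_neg (p q : ℂ) (x : ℝ) : phi p q (-x) = phi q p x := by
  rw [phi, phi]
  congr 1
  have h : Real.log (1 + Real.exp (-x)) = Real.log (1 + Real.exp x) - x := by
    have h2 : 1 + Real.exp (-x) = (1 + Real.exp x) * Real.exp (-x) := by
      rw [add_mul, one_mul, ← Real.exp_add]
      simp [add_comm]
    rw [h2, Real.log_mul (by positivity) (Real.exp_ne_zero _), Real.log_exp]
    ring
  rw [h]
  push_cast
  ring

lemma hasDerivAt_phi (p q : ℂ) (x : ℝ) :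
    HasDerivAt (phi p q) (p * phi p q x - (p + q) * phi (p + 1) q x) x := by
  have hpos : (0:ℝ) < 1 + Real.exp x := by positivity
  have hlog : HasDerivAt (fun x : ℝ => Real.log (1 + Real.exp x))
      (Real.exp x / (1 + Real.exp x)) x :=
    ((Real.hasDerivAt_exp x).const_add 1).log hpos.ne'
  have hin : HasDerivAt (fun x : ℝ => p * (x:ℂ) - (p + q) * (Real.log (1 + Real.exp x) : ℂ))
      (p - (p + q) * (Real.exp x / (1 + Real.exp x) : ℝ)) x := by
    have h1 : HasDerivAt (fun x : ℝ => p * (x:ℂ)) p x := by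
      simpa using ((hasDerivAt_id x).ofReal_comp.const_mul p)
    exact h1.sub ((hlog.ofReal_comp).const_mul (p+q))
  have := hin.cexp
  convert this using 1
  · rfl
  change _ = phi p q x * _
  have hratio : ((Real.exp x / (1 + Real.exp x) : ℝ) : ℂ)
      = Complex.exp ((x:ℂ) - (Real.log (1 + Real.exp x) : ℂ)) := by
    rw [Complex.exp_sub]
    push_cast
    rw [← Complex.ofReal_exp, Complex.ofReal_exp, ← Complex.ofReal_exp]
    norm_cast
    rw [Real.exp_log hpos]
  have hphi1 : phi (p+1) q x = phi p q x *
      Complex.exp ((x:ℂ) - (Real.log (1 + Real.exp x) : ℂ)) := by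
    rw [phi, phi, ← Complex.exp_add]
    congr 1
    ring
  rw [hphi1, hratio]
  ring

/-- A function bounded by `C/(1+x²)` is integrable. -/
lemma integrable_of_le_inv_one_add_sq {f : ℝ → ℂ} (hm : AEStronglyMeasurable f volume)
    {C : ℝ} (h : ∀ x : ℝ, ‖f x‖ ≤ C * (1 + x ^ 2)⁻¹) : Integrable f :=
  (integrable_inv_one_add_sq.const_mul C).mono' hm (Filter.Eventually.of_forall h)

lemma exp_neg_abs_le {δ : ℝ} (hδ : 0 < δ) (x : ℝ) :
    Real.exp (-(δ * |x|)) ≤ (1 + 4 / δ ^ 2) * (1 + x ^ 2)⁻¹ := by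
  rw [← div_eq_mul_inv, le_div_iff₀ (by positivity)]
  have he : (1 + δ * |x| / 2) ^ 2 ≤ Real.exp (δ * |x|) := by
    have h0 := Real.add_one_le_exp (δ * |x| / 2)
    calc (1 + δ * |x| / 2) ^ 2 ≤ (Real.exp (δ * |x| / 2)) ^ 2 := by
          apply pow_le_pow_left₀ (by positivity) (by linarith)
        _ = Real.exp (δ * |x| / 2 + δ * |x| / 2) := by rw [Real.exp_add]; ring
        _ = Real.exp (δ * |x|) := by ring_nf
  have hx2 : x ^ 2 ≤ (4 / δ ^ 2) * Real.exp (δ * |x|) := by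
    have h3 : (δ * |x| / 2) ^ 2 ≤ (1 + δ * |x| / 2) ^ 2 := by
      apply pow_le_pow_left₀ (by positivity) (by linarith)
    have h4 : (δ * |x|) ^ 2 / 4 ≤ Real.exp (δ * |x|) := by nlinarith
    have h5 : (δ * |x|) ^ 2 = δ ^ 2 * x ^ 2 := by rw [mul_pow, _root_.sq_abs]
    rw [div_mul_eq_mul_div, le_div_iff₀ (by positivity)]
    nlinarith
  have h4 : (1:ℝ) ≤ Real.exp (δ * |x|) := Real.one_le_exp (by positivity)
  have h6 : Real.exp (-(δ * |x|)) * Real.exp (δ * |x|) = 1 := by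
    rw [← Real.exp_add]; simp
  have h7 : Real.exp (-(δ * |x|)) ≤ 1 := Real.exp_le_one_iff.mpr (by simp; positivity)
  have h8 : 0 < Real.exp (-(δ * |x|)) := Real.exp_pos _
  calc Real.exp (-(δ * |x|)) * (1 + x ^ 2)
      ≤ Real.exp (-(δ * |x|)) * ((1 + 4 / δ ^ 2) * Real.exp (δ * |x|)) := by
        apply mul_le_mul_of_nonneg_left _ h8.le
        nlinarith
    _ = 1 + 4 / δ ^ 2 := by rw [mul_comm (1 + 4 / δ ^ 2), ← mul_assoc, h6, one_mul]

lemma norm_phi_le {p q : ℂ} (hp : 0 < p.re) (hq : 0 < q.re) (x : ℝ) :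
    ‖phi p q x‖ ≤ Real.exp (-(min p.re q.re * |x|)) := by
  rw [norm_phi, Real.exp_le_exp]
  have hlog0 : 0 ≤ Real.log (1 + Real.exp x) :=
    Real.log_nonneg (by nlinarith [Real.exp_pos x])
  have hlogx : x ≤ Real.log (1 + Real.exp x) := by
    calc x = Real.log (Real.exp x) := (Real.log_exp x).symm
      _ ≤ _ := Real.log_le_log (Real.exp_pos x) (by linarith)
  rcases le_or_gt 0 x with hx | hx
  · rw [_root_.abs_of_nonneg hx]
    have : p.re * x - (p.re + q.re) * Real.log (1 + Real.exp x)
        ≤ p.re * x - (p.re + q.re) * x := by nlinarith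
    have h2 : min p.re q.re ≤ q.re := min_le_right _ _
    nlinarith
  · rw [_root_.abs_of_neg hx]
    have h2 : min p.re q.re ≤ p.re := min_le_left _ _
    nlinarith

lemma integrable_phi {p q : ℂ} (hp : 0 < p.re) (hq : 0 < q.re) : Integrable (phi p q) := by
  have hδ : 0 < min p.re q.re := lt_min hp hq
  apply integrable_of_le_inv_one_add_sq
  · apply Continuous.aestronglyMeasurable
    unfold phi
    have : Continuous fun x : ℝ => Real.log (1 + Real.exp x) :=
      (continuous_const.add Real.continuous_exp).log
        (fun x => (by positivity : (0:ℝ) < 1 + Real.exp x).ne')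
    continuity
  · intro x
    exact (norm_phi_le hp hq x).trans (exp_neg_abs_le hδ x)

lemma contDiff_phi (p q : ℂ) : ContDiff ℝ 2 (phi p q) := by
  unfold phi
  apply Complex.contDiff_exp.comp
  apply ContDiff.sub
  · exact contDiff_const.mul (Complex.ofRealCLM.contDiff.comp contDiff_id)
  · exact contDiff_const.mul (Complex.ofRealCLM.contDiff.comp
      ((contDiff_const.add Real.contDiff_exp).log (fun x => by positivity)))

lemma deriv_phi (p q : ℂ) :
    deriv (phi p q) = fun x => p * phi p q x - (p + q) * phi (p + 1) q x :=
  funext fun x => (hasDerivAt_phi p q x).deriv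

lemma integrable_iteratedDeriv_phi {p q : ℂ} (hp : 0 < p.re) (hq : 0 < q.re)
    {n : ℕ} (hn : n ≤ 2) : Integrable (iteratedDeriv n (phi p q)) := by
  have hp1 : 0 < (p + 1).re := by simp [Complex.add_re]; linarith
  have hp2 : 0 < (p + 1 + 1).re := by simp [Complex.add_re]; linarith
  interval_cases n
  · simpa using integrable_phi hp hq
  · rw [iteratedDeriv_one, deriv_phi]
    exact ((integrable_phi hp hq).const_mul p).sub
      ((integrable_phi hp1 hq).const_mul (p + q))
  · have e2 : iteratedDeriv 2 (phi p q) = fun x =>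
        p * (p * phi p q x - (p + q) * phi (p + 1) q x) -
        (p + q) * ((p + 1) * phi (p + 1) q x - (p + 1 + q) * phi (p + 1 + 1) q x) := by
      have h0 : iteratedDeriv 2 (phi p q) = deriv (deriv (phi p q)) := by
        rw [show (2:ℕ) = 1 + 1 from rfl, iteratedDeriv_succ, iteratedDeriv_one]
      rw [h0, deriv_phi]
      funext x
      exact (((hasDerivAt_phi p q x).const_mul p).sub
        ((hasDerivAt_phi (p+1) q x).const_mul (p+q))).deriv
    rw [e2]
    exact ((((integrable_phi hp hq).const_mul p).sub
        ((integrable_phi hp1 hq).const_mul (p+q))).const_mul p).sub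
      (((((integrable_phi hp1 hq).const_mul (p+1)).sub
        ((integrable_phi hp2 hq).const_mul (p+1+q)))).const_mul (p+q))

lemma integrable_fourier_phi {p q : ℂ} (hp : 0 < p.re) (hq : 0 < q.re) :
    Integrable (𝓕 (phi p q)) := by
  have hint := integrable_phi hp hq
  have hcont : Continuous (𝓕 (phi p q)) :=
    VectorFourier.fourierIntegral_continuous (L := innerₗ ℝ) Real.continuous_fourierChar
      (by exact continuous_inner) hint
  have key : 𝓕 (iteratedDeriv 2 (phi p q)) =
      fun x : ℝ => (2 * Real.pi * Complex.I * x) ^ 2 • (𝓕 (phi p q) x) := by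
    apply Real.fourier_iteratedDeriv (N := 2) (contDiff_phi p q)
      (fun n hn => integrable_iteratedDeriv_phi hp hq (by exact_mod_cast hn)) le_rfl
  set C2 : ℝ := ∫ x : ℝ, ‖iteratedDeriv 2 (phi p q) x‖ with hC2
  set C0 : ℝ := ∫ x : ℝ, ‖phi p q x‖ with hC0
  apply integrable_of_le_inv_one_add_sq hcont.aestronglyMeasurable
    (C := C0 + C2 / (2 * Real.pi) ^ 2)
  intro x
  rw [← div_eq_mul_inv, le_div_iff₀ (by positivity)]
  have h1 : ‖𝓕 (phi p q) x‖ ≤ C0 :=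
    VectorFourier.norm_fourierIntegral_le_integral_norm _ _ _ _ _
  have h2 : x ^ 2 * ‖𝓕 (phi p q) x‖ ≤ C2 / (2 * Real.pi) ^ 2 := by
    have h3 : ‖𝓕 (iteratedDeriv 2 (phi p q)) x‖ ≤ C2 :=
      VectorFourier.norm_fourierIntegral_le_integral_norm _ _ _ _ _
    rw [key] at h3
    have h4 : ‖(2 * Real.pi * Complex.I * (x:ℂ)) ^ 2 • (𝓕 (phi p q) x)‖
        = (2 * Real.pi) ^ 2 * x ^ 2 * ‖𝓕 (phi p q) x‖ := by
      rw [norm_smul]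
      simp [norm_pow, mul_pow]
    rw [h4] at h3
    rw [le_div_iff₀ (by positivity)]
    nlinarith [norm_nonneg (𝓕 (phi p q) x), Real.pi_pos]
  nlinarith [norm_nonneg (𝓕 (phi p q) x)]

section Beta

lemma map_deriv_aux : ∀ x ∈ Ioo (0:ℝ) 1,
    HasDerivWithinAt (fun x : ℝ => x / (1 - x)) (((1 - x) ^ 2)⁻¹) (Ioo 0 1) x := by
  intro x hx
  have hne : (1:ℝ) - x ≠ 0 := by simp only [mem_Ioo] at hx; intro h; linarith [hx.2]
  have := (hasDerivAt_id x).div ((hasDerivAt_id x).const_sub 1) hne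
  refine (this.hasDerivWithinAt (s := Ioo 0 1)).congr_deriv ?_
  show (1 * (1 - x) - x * -1) / (1 - x) ^ 2 = ((1 - x) ^ 2)⁻¹
  ring

lemma map_injOn_aux : InjOn (fun x : ℝ => x / (1 - x)) (Ioo 0 1) := by
  intro x hx y hy hxy
  simp only [mem_Ioo] at hx hy
  have h1 : (1:ℝ) - x ≠ 0 := by intro h; linarith [hx.2]
  have h2 : (1:ℝ) - y ≠ 0 := by intro h; linarith [hy.2]
  field_simp at hxy
  linarith

lemma map_image_aux : (fun x : ℝ => x / (1 - x)) '' (Ioo 0 1) = Ioi 0 := by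
  ext t
  constructor
  · rintro ⟨x, hx, rfl⟩
    simp only [mem_Ioo] at hx
    have h5 : (0:ℝ) < 1 - x := by linarith [hx.2]
    exact mem_Ioi.mpr (div_pos hx.1 h5)
  · intro ht
    rw [mem_Ioi] at ht
    refine ⟨t / (1 + t), ?_, ?_⟩
    · constructor
      · positivity
      · rw [div_lt_one (by linarith)]; linarith
    · have h1 : (1:ℝ) + t ≠ 0 := ne_of_gt (by linarith)
      field_simp
      ring

lemma beta_pointwise {p q : ℂ} {x : ℝ} (hx : x ∈ Ioo (0:ℝ) 1) :
    |((1 - x) ^ 2)⁻¹| • (((x / (1 - x) : ℝ) : ℂ) ^ (p - 1) *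
      ((1 + (x / (1 - x)) : ℝ) : ℂ) ^ (-(p + q)))
    = (x:ℂ) ^ (p - 1) * ((1 - x : ℝ) : ℂ) ^ (q - 1) := by
  simp only [mem_Ioo] at hx
  have h0x : (0:ℝ) < x := hx.1
  have h1x : (0:ℝ) < 1 - x := by linarith [hx.2]
  have hcx : ((1:ℂ) - x) ≠ 0 := by
    rw [show ((1:ℂ) - x) = ((1 - x : ℝ) : ℂ) by push_cast; ring]
    exact_mod_cast h1x.ne'
  have harg : ((1 - x : ℝ) : ℂ).arg ≠ Real.pi := by
    rw [Complex.arg_ofReal_of_nonneg h1x.le]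
    exact Real.pi_ne_zero.symm
  -- the smul
  rw [abs_of_pos (by positivity), Complex.real_smul]
  -- 1 + x/(1-x) = (1-x)⁻¹
  have he1 : (1 + x / (1 - x) : ℝ) = (1 - x)⁻¹ := by field_simp; ring
  -- x/(1-x) = x * (1-x)⁻¹
  have he2 : (x / (1 - x) : ℝ) = x * (1 - x)⁻¹ := div_eq_mul_inv _ _
  rw [he1, he2, Complex.ofReal_mul]
  rw [Complex.mul_cpow_ofReal_nonneg h0x.le (by positivity)]
  have hinv : ((((1 - x)⁻¹ : ℝ)) : ℂ) = ((1 - x : ℝ) : ℂ)⁻¹ := Complex.ofReal_inv _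
  rw [hinv, Complex.inv_cpow _ _ harg, Complex.inv_cpow _ _ harg,
    ← Complex.cpow_neg, ← Complex.cpow_neg]
  have hb : ((1 - x : ℝ) : ℂ) ≠ 0 := by exact_mod_cast h1x.ne'
  have hre : (((1 - x) ^ 2)⁻¹ : ℝ) = (1 - x) ^ (-2 : ℝ) := by
    rw [Real.rpow_neg h1x.le, Real.rpow_two]
  have hpow : ((((1 - x) ^ 2)⁻¹ : ℝ) : ℂ) = ((1 - x : ℝ) : ℂ) ^ (-2 : ℂ) := by
    rw [hre, Complex.ofReal_cpow h1x.le]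
    norm_num
  rw [hpow, neg_neg]
  have hcomb : ((1 - x : ℝ) : ℂ) ^ (-2 : ℂ) * (((1 - x : ℝ) : ℂ) ^ (-(p-1)) *
      ((1 - x : ℝ) : ℂ) ^ (p+q)) = ((1 - x : ℝ) : ℂ) ^ (q - 1) := by
    rw [← Complex.cpow_add _ _ hb, ← Complex.cpow_add _ _ hb]
    congr 1
    ring
  rw [← hcomb]
  ring

lemma beta_Ioo_integral {p q : ℂ} (hp : 0 < p.re) (hq : 0 < q.re) :
    ∫ x in Ioo (0:ℝ) 1, (x:ℂ) ^ (p - 1) * ((1 - x : ℝ) : ℂ) ^ (q - 1)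
      = Complex.Gamma p * Complex.Gamma q / Complex.Gamma (p + q) := by
  have hB := Complex.Gamma_mul_Gamma_eq_betaIntegral hp hq
  have hne : Complex.Gamma (p + q) ≠ 0 := by
    apply Complex.Gamma_ne_zero
    intro m h
    have : (p + q).re = (-(m:ℂ)).re := by rw [h]
    simp [Complex.add_re] at this
    have hm : (0:ℝ) ≤ m := Nat.cast_nonneg m
    nlinarith
  have heq : ∫ x in Ioo (0:ℝ) 1, (x:ℂ) ^ (p - 1) * ((1 - x : ℝ) : ℂ) ^ (q - 1)
      = Complex.betaIntegral p q := by
    rw [Complex.betaIntegral, intervalIntegral.integral_of_le zero_le_one,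
      ← integral_Ioc_eq_integral_Ioo]
    apply setIntegral_congr_fun measurableSet_Ioc
    intro x _
    push_cast
    ring
  rw [heq]
  field_simp [hne] at hB ⊢
  rw [hB]

lemma beta_Ioo_integrable {p q : ℂ} (hp : 0 < p.re) (hq : 0 < q.re) :
    IntegrableOn (fun x : ℝ => (x:ℂ) ^ (p - 1) * ((1 - x : ℝ) : ℂ) ^ (q - 1)) (Ioo 0 1) := by
  have h := ((Complex.betaIntegral_convergent hp hq).1).mono_set Ioo_subset_Ioc_self
  exact h.congr_fun (fun x hx => by push_cast; ring) measurableSet_Ioo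

/-- Barnes-Beta: the Beta integral on `(0,∞)`. -/
lemma barnes_beta_integral {p q : ℂ} (hp : 0 < p.re) (hq : 0 < q.re) :
    ∫ t in Ioi (0:ℝ), (t:ℂ) ^ (p - 1) * ((1 + t : ℝ) : ℂ) ^ (-(p + q))
      = Complex.Gamma p * Complex.Gamma q / Complex.Gamma (p + q) := by
  rw [← map_image_aux, integral_image_eq_integral_abs_deriv_smul measurableSet_Ioo
    map_deriv_aux map_injOn_aux]
  rw [← beta_Ioo_integral hp hq]
  exact setIntegral_congr_fun measurableSet_Ioo fun x hx => beta_pointwise hx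

lemma barnes_beta_integrable {p q : ℂ} (hp : 0 < p.re) (hq : 0 < q.re) :
    IntegrableOn (fun t : ℝ => (t:ℂ) ^ (p - 1) * ((1 + t : ℝ) : ℂ) ^ (-(p + q))) (Ioi 0) := by
  rw [← map_image_aux, integrableOn_image_iff_integrableOn_abs_deriv_smul measurableSet_Ioo
    map_deriv_aux map_injOn_aux]
  exact (beta_Ioo_integrable hp hq).congr_fun (fun x hx => (beta_pointwise hx).symm)
    measurableSet_Ioo

end Beta

section Bfun

open scoped FourierTransform

/-- The Mellin kernel `t^a (1+t)^{-(a+c)}`. -/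
noncomputable def bfun (a c : ℂ) (t : ℝ) : ℂ :=
  (t:ℂ) ^ a * ((1 + t : ℝ) : ℂ) ^ (-(a + c))

lemma bfun_smul_eq {a c : ℂ} {s : ℂ} {t : ℝ} (ht : t ∈ Ioi (0:ℝ)) :
    (t:ℂ) ^ (s - 1) • bfun a c t
      = (t:ℂ) ^ ((s + a) - 1) * ((1 + t : ℝ) : ℂ) ^ (-((s + a) + (c - s))) := by
  rw [mem_Ioi] at ht
  have htne : (t:ℂ) ≠ 0 := by exact_mod_cast ht.ne'
  rw [smul_eq_mul, bfun, ← mul_assoc, ← Complex.cpow_add _ _ htne]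
  congr 2
  · ring
  · ring

lemma mellinConvergent_bfun {a c : ℂ} {s : ℂ} (h1 : -a.re < s.re) (h2 : s.re < c.re) :
    MellinConvergent (bfun a c) s := by
  have hp : 0 < (s + a).re := by simp [Complex.add_re]; linarith
  have hq : 0 < (c - s).re := by simp [Complex.sub_re]; linarith
  exact (barnes_beta_integrable hp hq).congr_fun
    (fun t ht => (bfun_smul_eq ht).symm) measurableSet_Ioi

lemma mellin_bfun {a c : ℂ} {s : ℂ} (h1 : -a.re < s.re) (h2 : s.re < c.re) :
    mellin (bfun a c) s
      = Complex.Gamma (s + a) * Complex.Gamma (c - s) / Complex.Gamma (a + c) := by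
  have hp : 0 < (s + a).re := by simp [Complex.add_re]; linarith
  have hq : 0 < (c - s).re := by simp [Complex.sub_re]; linarith
  have := barnes_beta_integral hp hq
  rw [mellin, setIntegral_congr_fun measurableSet_Ioi
    (fun t ht => bfun_smul_eq (a := a) (c := c) (s := s) ht), this]
  congr 2 <;> ring

lemma continuousAt_bfun (a c : ℂ) {t : ℝ} (ht : 0 < t) : ContinuousAt (bfun a c) t := by
  apply ContinuousAt.mul
  · exact continuousAt_ofReal_cpow_const t a (Or.inr ht.ne')
  · exact (continuousAt_ofReal_cpow_const (1 + t) (-(a+c))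
      (Or.inr (by positivity))).comp (by fun_prop)

lemma bfun_fourier_eq {a c : ℂ} (σ' : ℝ) :
    (fun u : ℝ => Real.exp (-σ' * u) • bfun a c (Real.exp (-u)))
      = phi (c - σ') (σ' + a) := by
  funext u
  rw [← phi_neg, phi]
  have he : (0:ℝ) < Real.exp (-u) := Real.exp_pos _
  have h1 : ((Real.exp (-u) : ℝ) : ℂ) ^ a = Complex.exp (a * (-u : ℝ)) := by
    rw [Complex.cpow_def_of_ne_zero (by exact_mod_cast he.ne'),
      ← Complex.ofReal_log he.le, Real.log_exp]
    rw [mul_comm]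
  have h2 : ((1 + Real.exp (-u) : ℝ) : ℂ) ^ (-(a + c))
      = Complex.exp (-(a + c) * (Real.log (1 + Real.exp (-u)) : ℝ)) := by
    rw [Complex.cpow_def_of_ne_zero (by exact_mod_cast (by positivity : (0:ℝ) < 1 + Real.exp (-u)).ne'),
      ← Complex.ofReal_log (by positivity)]
    rw [mul_comm]
  rw [bfun, h1, h2, Complex.real_smul, Complex.ofReal_exp, ← Complex.exp_add, ← Complex.exp_add]
  congr 1
  push_cast
  ring

lemma mellin_bfun_line {a c : ℂ} (σ' : ℝ) (y : ℝ) :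
    mellin (bfun a c) (σ' + y * Complex.I)
      = 𝓕 (phi (c - σ') (σ' + a)) (y / (2 * Real.pi)) := by
  rw [mellin_eq_fourier]
  have h1 : ((σ' : ℂ) + y * Complex.I).re = σ' := by simp
  have h2 : ((σ' : ℂ) + y * Complex.I).im = y := by simp
  rw [h1, h2, bfun_fourier_eq]

lemma verticalIntegrable_bfun {a c : ℂ} {σ' : ℝ} (h1 : -a.re < σ') (h2 : σ' < c.re) :
    Complex.VerticalIntegrable (mellin (bfun a c)) σ' := by
  have hp : 0 < (c - (σ' : ℂ)).re := by simp [Complex.sub_re]; linarith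
  have hq : 0 < ((σ' : ℂ) + a).re := by simp [Complex.add_re]; linarith
  have h2π : (2 * Real.pi) ≠ 0 := by positivity
  unfold Complex.VerticalIntegrable
  simp_rw [mellin_bfun_line]
  exact (integrable_fourier_phi hp hq).comp_div h2π

lemma ofReal_inv_cpow {t : ℝ} (ht : 0 < t) (w : ℂ) :
    ((t⁻¹ : ℝ) : ℂ) ^ w = (t:ℂ) ^ (-w) := by
  have harg : ((t : ℝ) : ℂ).arg ≠ Real.pi := by
    rw [Complex.arg_ofReal_of_nonneg ht.le]; exact Real.pi_ne_zero.symm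
  rw [Complex.ofReal_inv, Complex.inv_cpow _ _ harg, ← Complex.cpow_neg]

lemma pointwise_final {a b c d : ℂ} {t : ℝ} (ht : 0 < t) :
    bfun a c t * ((t:ℂ)⁻¹ * bfun b d t⁻¹)
      = (t:ℂ) ^ ((a + d) - 1) * ((1 + t : ℝ) : ℂ) ^ (-((a + d) + (b + c))) := by
  have htne : (t:ℂ) ≠ 0 := by exact_mod_cast ht.ne'
  have h1t : (1 + t⁻¹ : ℝ) = (1 + t) * t⁻¹ := by field_simp; ring
  rw [bfun, bfun, h1t, Complex.ofReal_mul,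
    Complex.mul_cpow_ofReal_nonneg (by positivity) (by positivity),
    ofReal_inv_cpow ht, ofReal_inv_cpow ht, neg_neg]
  have hinv : (t:ℂ)⁻¹ = (t:ℂ) ^ (-1 : ℂ) := by
    rw [Complex.cpow_neg, Complex.cpow_one]
  rw [hinv]
  have hcol : ∀ w₁ w₂ : ℂ, (t:ℂ) ^ w₁ * (t:ℂ) ^ w₂ = (t:ℂ) ^ (w₁ + w₂) :=
    fun w₁ w₂ => (Complex.cpow_add _ _ htne).symm
  have hcol2 : ∀ w₁ w₂ : ℂ, ((1 + t : ℝ) : ℂ) ^ w₁ * ((1 + t : ℝ) : ℂ) ^ w₂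
      = ((1 + t : ℝ) : ℂ) ^ (w₁ + w₂) :=
    fun w₁ w₂ => (Complex.cpow_add _ _ (by exact_mod_cast (by positivity : (0:ℝ) < 1 + t).ne')).symm
  calc (t:ℂ)^a * ((1+t:ℝ):ℂ)^(-(a+c)) * ((t:ℂ)^(-1:ℂ) *
        ((t:ℂ)^(-b) * (((1+t:ℝ):ℂ)^(-(b+d)) * (t:ℂ)^(b+d))))
      = ((t:ℂ)^a * (t:ℂ)^(-1:ℂ) * (t:ℂ)^(-b) * (t:ℂ)^(b+d)) *
        (((1+t:ℝ):ℂ)^(-(a+c)) * ((1+t:ℝ):ℂ)^(-(b+d))) := by ring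
    _ = (t:ℂ)^(a + -1 + -b + (b+d)) * ((1+t:ℝ):ℂ)^(-(a+c) + -(b+d)) := by
        rw [hcol, hcol, hcol, hcol2]
    _ = (t:ℂ) ^ ((a + d) - 1) * ((1 + t : ℝ) : ℂ) ^ (-((a + d) + (b + c))) := by
        congr 1 <;> [skip; skip] <;> congr 1 <;> ring

lemma parseval_core {a b c d : ℂ} {σ' : ℝ} (ha : -a.re < σ') (hc : σ' < c.re)
    (hb : -b.re < σ') (hd : σ' < d.re) :
    ∫ y : ℝ, mellin (bfun a c) (σ' + y * Complex.I) * mellin (bfun b d) (σ' + y * Complex.I)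
      = 2 * Real.pi *
        (Complex.Gamma (a + d) * Complex.Gamma (b + c) / Complex.Gamma (a + b + c + d)) := by
  have hσa : -a.re < ((σ' : ℂ)).re := by simpa using ha
  have hσc : ((σ' : ℂ)).re < c.re := by simpa using hc
  have hσb : -b.re < ((σ' : ℂ)).re := by simpa using hb
  have hσd : ((σ' : ℂ)).re < d.re := by simpa using hd
  set G := mellin (bfun b d) with hG
  have hpi : (0:ℝ) < 2 * Real.pi := by positivity
  -- the inner function
  set H : ℝ → ℝ → ℂ := fun y t =>
    ((t:ℂ) ^ ((σ' + y * Complex.I) - 1) * bfun a c t) * G (σ' + y * Complex.I) with hH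
  have hmeas : volume.prod (volume.restrict (Ioi (0:ℝ)))
      = (volume.prod volume).restrict ((univ : Set ℝ) ×ˢ Ioi (0:ℝ)) := by
    rw [← Measure.prod_restrict, Measure.restrict_univ]
  have hGcont : Continuous (fun y : ℝ => G (σ' + y * Complex.I)) := by
    have : (fun y : ℝ => G (σ' + y * Complex.I))
        = fun y : ℝ => 𝓕 (phi (d - σ') (σ' + b)) (y / (2 * Real.pi)) :=
      funext fun y => mellin_bfun_line σ' y
    rw [this]
    have hpd : 0 < (d - (σ' : ℂ)).re := by simp [Complex.sub_re]; linarith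
    have hqb : 0 < ((σ' : ℂ) + b).re := by simp [Complex.add_re]; linarith
    exact (VectorFourier.fourierIntegral_continuous (L := innerₗ ℝ) Real.continuous_fourierChar
      (by exact continuous_inner) (integrable_phi hpd hqb)).comp
      (continuous_id.div_const _)
  have hint : Integrable (Function.uncurry H) (volume.prod (volume.restrict (Ioi 0))) := by
    have h1 : Integrable (fun y : ℝ => ‖G (σ' + y * Complex.I)‖) volume :=
      (verticalIntegrable_bfun hb hd).norm
    have h2 : Integrable (fun t : ℝ => ‖(t:ℂ) ^ ((σ' : ℂ) - 1) • bfun a c t‖)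
        (volume.restrict (Ioi 0)) := (mellinConvergent_bfun hσa hσc).norm
    have hg : Integrable (fun z : ℝ × ℝ => ‖G (σ' + z.1 * Complex.I)‖ *
        ‖(z.2:ℂ) ^ ((σ' : ℂ) - 1) • bfun a c z.2‖)
        (volume.prod (volume.restrict (Ioi 0))) := Integrable.mul_prod h1 h2
    have hm : AEStronglyMeasurable (Function.uncurry H)
        (volume.prod (volume.restrict (Ioi 0))) := by
      rw [hmeas]
      apply ContinuousOn.aestronglyMeasurable _ (MeasurableSet.univ.prod measurableSet_Ioi)
      intro z hz
      have ht : (0:ℝ) < z.2 := by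
        simp only [mem_prod, mem_Ioi] at hz
        exact hz.2
      apply ContinuousAt.continuousWithinAt
      have hc1 : ContinuousAt (fun z : ℝ × ℝ =>
          ((z.2 : ℂ)) ^ (((σ' : ℂ) + z.1 * Complex.I) - 1)) z := by
        apply ContinuousAt.cpow
        · exact (Complex.continuous_ofReal.comp continuous_snd).continuousAt
        · fun_prop
        · exact Complex.ofReal_mem_slitPlane.mpr ht
      have hc2 : ContinuousAt (fun z : ℝ × ℝ => bfun a c z.2) z :=
        (continuousAt_bfun a c ht).comp continuous_snd.continuousAt
      have hc3 : ContinuousAt (fun z : ℝ × ℝ => G (σ' + z.1 * Complex.I)) z :=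
        (hGcont.comp continuous_fst).continuousAt
      exact (hc1.mul hc2).mul hc3
    apply Integrable.mono' hg hm
    rw [hmeas]
    filter_upwards [ae_restrict_mem (MeasurableSet.univ.prod measurableSet_Ioi)] with z hz
    have ht : (0:ℝ) < z.2 := by
      simp only [mem_prod, mem_Ioi] at hz
      exact hz.2
    have e1 : ‖(z.2:ℂ) ^ (((σ' : ℂ) + z.1 * Complex.I) - 1)‖ = z.2 ^ (σ' - 1 : ℝ) := by
      rw [Complex.norm_cpow_eq_rpow_re_of_pos ht]
      congr 1 <;> simp
    have e2 : ‖(z.2:ℂ) ^ ((σ' : ℂ) - 1)‖ = z.2 ^ (σ' - 1 : ℝ) := by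
      rw [Complex.norm_cpow_eq_rpow_re_of_pos ht]
      congr 1 <;> simp
    apply le_of_eq
    calc ‖Function.uncurry H z‖
        = ‖(z.2:ℂ) ^ (((σ' : ℂ) + z.1 * Complex.I) - 1)‖ * ‖bfun a c z.2‖ *
          ‖G (σ' + z.1 * Complex.I)‖ := by
          simp only [Function.uncurry, H, norm_mul]
      _ = ‖G (σ' + z.1 * Complex.I)‖ *
          ‖(z.2:ℂ) ^ ((σ' : ℂ) - 1) • bfun a c z.2‖ := by
          rw [norm_smul, e1, e2]
          ring
  have step1 : ∫ y : ℝ, mellin (bfun a c) (σ' + y * Complex.I) * G (σ' + y * Complex.I)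
      = ∫ y : ℝ, ∫ t in Ioi (0:ℝ), H y t := by
    congr 1; funext y
    rw [mellin, ← integral_mul_const]
    simp only [smul_eq_mul, H]
  have swap := integral_integral_swap hint
  have inner_eq : ∀ t ∈ Ioi (0:ℝ), (∫ y : ℝ, H y t)
      = (2 * Real.pi : ℝ) • (bfun a c t * ((t:ℂ)⁻¹ * bfun b d t⁻¹)) := by
    intro t ht
    rw [mem_Ioi] at ht
    have htne : (t:ℂ) ≠ 0 := by exact_mod_cast ht.ne'
    have hinv := mellinInv_mellin_eq σ' (bfun b d) (inv_pos.mpr ht)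
      (mellinConvergent_bfun hσb hσd) (verticalIntegrable_bfun hb hd)
      (continuousAt_bfun b d (inv_pos.mpr ht))
    rw [mellinInv] at hinv
    have hptw : ∀ y : ℝ, H y t = (bfun a c t * (t:ℂ)⁻¹) *
        (((t⁻¹ : ℝ) : ℂ) ^ (-((σ' : ℂ) + y * Complex.I)) • G (σ' + y * Complex.I)) := by
      intro y
      have e1 : ((t⁻¹ : ℝ) : ℂ) ^ (-((σ' : ℂ) + y * Complex.I))
          = (t:ℂ) ^ ((σ' : ℂ) + y * Complex.I) := by
        rw [ofReal_inv_cpow ht, neg_neg]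
      have e2 : (t:ℂ) ^ ((σ' + y * Complex.I) - 1)
          = (t:ℂ) ^ ((σ' : ℂ) + y * Complex.I) * (t:ℂ)⁻¹ := by
        rw [Complex.cpow_sub _ _ htne, Complex.cpow_one, div_eq_mul_inv]
      simp only [H, smul_eq_mul]
      rw [e1, e2]
      ring
    simp_rw [hptw]
    rw [integral_const_mul]
    have hI : (∫ y : ℝ, ((t⁻¹ : ℝ) : ℂ) ^ (-((σ' : ℂ) + y * Complex.I)) •
        G (σ' + y * Complex.I)) = (2 * Real.pi : ℝ) • bfun b d t⁻¹ := by
      have h2 := congrArg (fun z => (2 * Real.pi : ℝ) • z) hinv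
      rw [smul_smul, mul_one_div, div_self hpi.ne', one_smul] at h2
      rw [← h2]
    rw [hI, mul_smul_comm, mul_assoc]
  -- assemble
  have hp2 : 0 < (a + d).re := by simp [Complex.add_re]; linarith
  have hq2 : 0 < (b + c).re := by simp [Complex.add_re]; linarith
  calc ∫ y : ℝ, mellin (bfun a c) (σ' + y * Complex.I) * G (σ' + y * Complex.I)
      = ∫ t in Ioi (0:ℝ), ∫ y : ℝ, H y t := by rw [step1, swap]
    _ = ∫ t in Ioi (0:ℝ), (2 * Real.pi : ℝ) •
          (bfun a c t * ((t:ℂ)⁻¹ * bfun b d t⁻¹)) :=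
        setIntegral_congr_fun measurableSet_Ioi inner_eq
    _ = (2 * Real.pi : ℝ) • ∫ t in Ioi (0:ℝ),
          (t:ℂ) ^ ((a + d) - 1) * ((1 + t : ℝ) : ℂ) ^ (-((a + d) + (b + c))) := by
        rw [integral_smul]
        congr 1
        exact setIntegral_congr_fun measurableSet_Ioi fun t ht => pointwise_final (mem_Ioi.mp ht)
    _ = (2 * Real.pi : ℝ) • (Complex.Gamma (a + d) * Complex.Gamma (b + c) /
          Complex.Gamma ((a + d) + (b + c))) := by rw [barnes_beta_integral hp2 hq2]
    _ = 2 * Real.pi * (Complex.Gamma (a + d) * Complex.Gamma (b + c) /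
          Complex.Gamma (a + b + c + d)) := by
        rw [Complex.real_smul]
        push_cast
        congr 3
        ring

end Bfun

lemma Gamma_ne_zero_of_re_pos' {s : ℂ} (hs : 0 < s.re) : Complex.Gamma s ≠ 0 := by
  apply Complex.Gamma_ne_zero
  intro m h
  rw [h] at hs
  simp at hs
  have hm : (0:ℝ) ≤ m := Nat.cast_nonneg m
  nlinarith

end BarnesAux

open Real Complex Set in
/-- Barnes' first lemma, in complex Gamma factor form, with the contour the vertical line
`Re z = σ` separating the two families of poles. -/
theorem stmt_8 (a b c d : ℂ) (σ : ℝ) (ha : -2 * a.re < σ) (hb : -2 * b.re < σ)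
    (hc : σ < 2 * c.re) (hd : σ < 2 * d.re) :
    (1 / (2 * (Real.pi : ℂ))) * ∫ y : ℝ,
        GammaC (((σ : ℂ) + Complex.I * y) / 2 + a) *
        GammaC (((σ : ℂ) + Complex.I * y) / 2 + b) *
        GammaC (-((σ : ℂ) + Complex.I * y) / 2 + c) *
        GammaC (-((σ : ℂ) + Complex.I * y) / 2 + d)
      = 4 * (GammaC (a + c) * GammaC (a + d) * GammaC (b + c) * GammaC (b + d) /
          GammaC (a + b + c + d)) := by
  set σ' : ℝ := σ / 2 with hσ'
  have ha' : -a.re < σ' := by rw [hσ']; linarith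
  have hb' : -b.re < σ' := by rw [hσ']; linarith
  have hc' : σ' < c.re := by rw [hσ']; linarith
  have hd' : σ' < d.re := by rw [hσ']; linarith
  set P : ℂ := ((2 * Real.pi : ℝ) : ℂ) with hP
  have hPne : P ≠ 0 := by
    rw [hP]
    exact_mod_cast (by positivity : (2 * Real.pi : ℝ) ≠ 0)
  have hGac : Complex.Gamma (a + c) ≠ 0 :=
    Gamma_ne_zero_of_re_pos' (by simp [Complex.add_re]; linarith)
  have hGbd : Complex.Gamma (b + d) ≠ 0 :=
    Gamma_ne_zero_of_re_pos' (by simp [Complex.add_re]; linarith)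
  have hGS : Complex.Gamma (a + b + c + d) ≠ 0 :=
    Gamma_ne_zero_of_re_pos' (by simp [Complex.add_re]; linarith)
  set g : ℝ → ℂ := fun u =>
    mellin (bfun a c) (σ' + u * Complex.I) * mellin (bfun b d) (σ' + u * Complex.I) with hg
  have key : ∀ y : ℝ,
      GammaC (((σ : ℂ) + Complex.I * y) / 2 + a) *
        GammaC (((σ : ℂ) + Complex.I * y) / 2 + b) *
        GammaC (-((σ : ℂ) + Complex.I * y) / 2 + c) *
        GammaC (-((σ : ℂ) + Complex.I * y) / 2 + d)
      = (16 * P ^ (-(a + b + c + d)) * (Complex.Gamma (a + c) * Complex.Gamma (b + d)))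
          * g (y / 2) := by
    intro y
    set s : ℂ := (σ' : ℂ) + (y / 2 : ℝ) * Complex.I with hs
    have hsre1 : -a.re < s.re := by simp [hs]; linarith
    have hsre2 : s.re < c.re := by simp [hs]; linarith
    have hsre3 : -b.re < s.re := by simp [hs]; linarith
    have hsre4 : s.re < d.re := by simp [hs]; linarith
    have e1 : ((σ : ℂ) + Complex.I * y) / 2 + a = s + a := by
      rw [hs, hσ']; push_cast; ring
    have e2 : ((σ : ℂ) + Complex.I * y) / 2 + b = s + b := by
      rw [hs, hσ']; push_cast; ring
    have e3 : -((σ : ℂ) + Complex.I * y) / 2 + c = c - s := by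
      rw [hs, hσ']; push_cast; ring
    have e4 : -((σ : ℂ) + Complex.I * y) / 2 + d = d - s := by
      rw [hs, hσ']; push_cast; ring
    have m1 : Complex.Gamma (s + a) * Complex.Gamma (c - s)
        = Complex.Gamma (a + c) * mellin (bfun a c) s := by
      rw [mellin_bfun hsre1 hsre2]
      field_simp
    have m2 : Complex.Gamma (s + b) * Complex.Gamma (d - s)
        = Complex.Gamma (b + d) * mellin (bfun b d) s := by
      rw [mellin_bfun hsre3 hsre4]
      field_simp
    have hPcomb : P ^ (-(s + a)) * P ^ (-(s + b)) * P ^ (-(c - s)) * P ^ (-(d - s))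
        = P ^ (-(a + b + c + d)) := by
      rw [← Complex.cpow_add _ _ hPne, ← Complex.cpow_add _ _ hPne,
        ← Complex.cpow_add _ _ hPne]
      congr 1
      ring
    have hgy : g (y / 2) = mellin (bfun a c) s * mellin (bfun b d) s := by
      rw [hg, hs]
    rw [e1, e2, e3, e4, hgy]
    unfold GammaC
    calc 2 * P ^ (-(s + a)) * Complex.Gamma (s + a) * (2 * P ^ (-(s + b)) * Complex.Gamma (s + b))
          * (2 * P ^ (-(c - s)) * Complex.Gamma (c - s))
          * (2 * P ^ (-(d - s)) * Complex.Gamma (d - s))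
        = 16 * (P ^ (-(s + a)) * P ^ (-(s + b)) * P ^ (-(c - s)) * P ^ (-(d - s))) *
          ((Complex.Gamma (s + a) * Complex.Gamma (c - s)) *
           (Complex.Gamma (s + b) * Complex.Gamma (d - s))) := by ring
      _ = 16 * P ^ (-(a + b + c + d)) *
          ((Complex.Gamma (a + c) * mellin (bfun a c) s) *
           (Complex.Gamma (b + d) * mellin (bfun b d) s)) := by rw [hPcomb, m1, m2]
      _ = (16 * P ^ (-(a + b + c + d)) * (Complex.Gamma (a + c) * Complex.Gamma (b + d)))
          * (mellin (bfun a c) s * mellin (bfun b d) s) := by ring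
  have hint_eq : (∫ y : ℝ,
      GammaC (((σ : ℂ) + Complex.I * y) / 2 + a) *
        GammaC (((σ : ℂ) + Complex.I * y) / 2 + b) *
        GammaC (-((σ : ℂ) + Complex.I * y) / 2 + c) *
        GammaC (-((σ : ℂ) + Complex.I * y) / 2 + d))
      = (16 * P ^ (-(a + b + c + d)) * (Complex.Gamma (a + c) * Complex.Gamma (b + d)))
          * ∫ y : ℝ, g (y / 2) := by
    rw [← integral_const_mul]
    exact integral_congr_ae (Filter.Eventually.of_forall key)
  have hdiv : (∫ y : ℝ, g (y / 2)) = (2:ℝ) • ∫ u : ℝ, g u := by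
    have := MeasureTheory.Measure.integral_comp_div g 2
    rw [this]
    norm_num
  have hpars : (∫ u : ℝ, g u) = 2 * Real.pi *
      (Complex.Gamma (a + d) * Complex.Gamma (b + c) / Complex.Gamma (a + b + c + d)) :=
    parseval_core ha' hc' hb' hd'
  rw [hint_eq, hdiv, hpars, Complex.real_smul]
  have h2 : ((2:ℝ):ℂ) = 2 := by norm_num
  have h2πP : (2 * (Real.pi : ℂ)) = P := by rw [hP]; push_cast; ring
  rw [h2, h2πP]
  unfold GammaC
  rw [← hP]
  have hsplit : P ^ (-(a + c)) * P ^ (-(a + d)) * P ^ (-(b + c)) * P ^ (-(b + d))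
      = P ^ (-(a + b + c + d)) * P ^ (-(a + b + c + d)) := by
    rw [← Complex.cpow_add _ _ hPne, ← Complex.cpow_add _ _ hPne,
      ← Complex.cpow_add _ _ hPne, ← Complex.cpow_add _ _ hPne]
    congr 1
    ring
  have hPSne : P ^ (-(a + b + c + d)) ≠ 0 := by
    intro h
    exact hPne (Complex.cpow_eq_zero_iff _ _ |>.mp h).1
  have hNum : 2 * P ^ (-(a + c)) * Complex.Gamma (a + c) *
        (2 * P ^ (-(a + d)) * Complex.Gamma (a + d)) *
        (2 * P ^ (-(b + c)) * Complex.Gamma (b + c)) *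
        (2 * P ^ (-(b + d)) * Complex.Gamma (b + d))
      = 16 * (P ^ (-(a + b + c + d)) * P ^ (-(a + b + c + d))) *
        (Complex.Gamma (a + c) * Complex.Gamma (a + d) *
         Complex.Gamma (b + c) * Complex.Gamma (b + d)) := by
    rw [← hsplit]
    ring
  rw [hNum]
  field_simp [hPne, hPSne, hGS]
  ring
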